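/- Let k ≥ 3, b_k = 2^{k-1} - a_{k-2} + 1, and 0 ≤ u ≤ 2^{k-1} - b_k. Then M(b_k + u) = M(2^{k-1} - (a_{k-1} + u)) and M(2^k - (b_k + u)) = M(2^{k-1} - (a_{k-1} + u)), where M(n) is the number of optimal BSD representations of n of length equal to its NAF-bitlength. -/
import Mathlib


open Polynomial in
/-- The Stern polynomial: `B 0 = 0`, `B 1 = 1`, `B (2n) = t * B n`, `B (2n+1) = B n + B (n+1)`. -/
noncomputable def sternP : ℕ → Polynomial ℕ
  | 0 => 0
  | 1 => 1
  | n + 2 =>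
    if (n + 2) % 2 = 0 then X * sternP (n / 2 + 1)
    else sternP (n / 2 + 1) + sternP (n / 2 + 2)
decreasing_by all_goals omega

/-- The digits of a BSD representation lie in {-1, 0, 1}. -/
def IsBSDDigits {i : ℕ} (b : Fin i → ℤ) : Prop := ∀ j, b j ∈ ({-1, 0, 1} : Set ℤ)

/-- The value represented by the digit string `b` (least significant digit `b 0`). -/
def bsdVal {i : ℕ} (b : Fin i → ℤ) : ℤ := ∑ j : Fin i, b j * 2 ^ (j : ℕ)

/-- `b` is a (not necessarily reduced) non-adjacent form digit string of length `k`: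
digits in {-1,0,1}, no two adjacent digits both nonzero, and nonzero leading digit
(when `k > 0`). -/
def IsReducedNAF {k : ℕ} (b : Fin k → ℤ) : Prop :=
  IsBSDDigits b ∧
  (∀ j : Fin k, ∀ h : (j : ℕ) + 1 < k, b j = 0 ∨ b ⟨(j : ℕ) + 1, h⟩ = 0) ∧
  (∀ h : 0 < k, b ⟨k - 1, Nat.sub_lt h one_pos⟩ ≠ 0)

/-- `m` has a reduced NAF representation of bitlength `k`. -/
def HasNAFLen (m : ℤ) (k : ℕ) : Prop :=
  ∃ b : Fin k → ℤ, IsReducedNAF b ∧ bsdVal b = m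

/-- `I k`: the set of positive integers of NAF-bitlength `k`. -/
def NAFInterval (k : ℕ) : Set ℕ := {n : ℕ | HasNAFLen (n : ℤ) k}

/-- `a k = min I k`: `a 1 = 1`, `a 2 = 2`, `a k = 2^(k-2) + a (k-2)`. -/
def aseq : ℕ → ℕ
  | 0 => 0
  | 1 => 1
  | 2 => 2
  | k + 3 => 2 ^ (k + 1) + aseq (k + 1)

/-- The NAF-bitlength of `n`. -/
noncomputable def nafLen (n : ℕ) : ℕ := sInf {k : ℕ | HasNAFLen (n : ℤ) k}

/-- The minimal Hamming weight of a BSD representation of `n` of length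
equal to its NAF-bitlength. -/
noncomputable def minWeight (n : ℕ) : ℕ :=
  sInf {w : ℕ | ∃ b : Fin (nafLen n) → ℤ,
    IsBSDDigits b ∧ bsdVal b = (n : ℤ) ∧ {j | b j ≠ 0}.ncard = w}

/-- `Z n`: the number of zeros in an optimal (minimal-weight) BSD representation of `n`
of length equal to its NAF-bitlength. -/
noncomputable def Zfun (n : ℕ) : ℕ := nafLen n - minWeight n

/-- `M n`: the number of optimal (minimal-weight) BSD representations of `n`
of length equal to its NAF-bitlength. -/
noncomputable def Mfun (n : ℕ) : ℕ :=
  {b : Fin (nafLen n) → ℤ |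
    IsBSDDigits b ∧ bsdVal b = (n : ℤ) ∧ {j | b j ≠ 0}.ncard = minWeight n}.ncard


/-- weight as a sum -/
def wt {i : ℕ} (b : Fin i → ℤ) : ℕ := ∑ j : Fin i, (if b j = 0 then 0 else 1)

lemma ncard_eq_wt {i : ℕ} (b : Fin i → ℤ) : {j | b j ≠ 0}.ncard = wt b := by
  have h : {j | b j ≠ 0} = ↑(Finset.univ.filter (fun j => b j ≠ 0)) := by
    ext j; simp
  rw [h, Set.ncard_coe_finset, wt, Finset.card_filter]
  simp only [ne_eq, ite_not]

lemma bsdVal_snoc {m : ℕ} (b : Fin m → ℤ) (d : ℤ) :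
    bsdVal (Fin.snoc b d) = bsdVal b + d * 2 ^ m := by
  unfold bsdVal
  rw [Fin.sum_univ_castSucc]
  simp [Fin.snoc_castSucc]

lemma wt_snoc {m : ℕ} (b : Fin m → ℤ) (d : ℤ) :
    wt (Fin.snoc b d) = wt b + (if d = 0 then 0 else 1) := by
  unfold wt
  rw [Fin.sum_univ_castSucc]
  simp [Fin.snoc_castSucc]

lemma bsd_snoc {m : ℕ} {b : Fin m → ℤ} {d : ℤ} (hb : IsBSDDigits b)
    (hd : d ∈ ({-1, 0, 1} : Set ℤ)) : IsBSDDigits (Fin.snoc b d) := by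
  intro j
  refine Fin.lastCases ?_ ?_ j
  · simpa using hd
  · intro i; simpa using hb i

lemma bsd_init {m : ℕ} {b : Fin (m+1) → ℤ} (hb : IsBSDDigits b) :
    IsBSDDigits (Fin.init b) := fun j => hb _

lemma bsdVal_init {m : ℕ} (b : Fin (m+1) → ℤ) :
    bsdVal b = bsdVal (Fin.init b) + b (Fin.last m) * 2 ^ m := by
  conv_lhs => rw [← Fin.snoc_init_self b]
  rw [bsdVal_snoc]

lemma wt_init {m : ℕ} (b : Fin (m+1) → ℤ) :
    wt b = wt (Fin.init b) + (if b (Fin.last m) = 0 then 0 else 1) := by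
  conv_lhs => rw [← Fin.snoc_init_self b]
  rw [wt_snoc]

lemma bsdVal_cons {m : ℕ} (d : ℤ) (b : Fin m → ℤ) :
    bsdVal (Fin.cons d b) = d + 2 * bsdVal b := by
  unfold bsdVal
  rw [Fin.sum_univ_succ]
  have h : ∀ j : Fin m, (Fin.cons d b : Fin (m+1) → ℤ) j.succ * 2 ^ ((j.succ : Fin (m+1)) : ℕ)
      = 2 * (b j * 2 ^ (j : ℕ)) := by
    intro j
    simp [Fin.cons_succ, pow_succ]
    ring
  rw [Finset.sum_congr rfl (fun j _ => h j), ← Finset.mul_sum]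
  simp

lemma wt_cons {m : ℕ} (d : ℤ) (b : Fin m → ℤ) :
    wt (Fin.cons d b) = (if d = 0 then 0 else 1) + wt b := by
  unfold wt
  rw [Fin.sum_univ_succ]
  simp [Fin.cons_succ]

lemma bsd_cons {m : ℕ} {d : ℤ} {b : Fin m → ℤ} (hd : d ∈ ({-1, 0, 1} : Set ℤ))
    (hb : IsBSDDigits b) : IsBSDDigits (Fin.cons d b) := by
  intro j
  refine Fin.cases ?_ ?_ j
  · simpa using hd
  · intro i; simpa using hb i

lemma bsd_tail {m : ℕ} {b : Fin (m+1) → ℤ} (hb : IsBSDDigits b) :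
    IsBSDDigits (Fin.tail b) := fun j => hb _

lemma bsdVal_tail {m : ℕ} (b : Fin (m+1) → ℤ) :
    bsdVal b = b 0 + 2 * bsdVal (Fin.tail b) := by
  conv_lhs => rw [← Fin.cons_self_tail b]
  rw [bsdVal_cons]

lemma wt_tail {m : ℕ} (b : Fin (m+1) → ℤ) :
    wt b = (if b 0 = 0 then 0 else 1) + wt (Fin.tail b) := by
  conv_lhs => rw [← Fin.cons_self_tail b]
  rw [wt_cons]

lemma abs_bsdVal_le {m : ℕ} {b : Fin m → ℤ} (hb : IsBSDDigits b) :
    |bsdVal b| ≤ 2 ^ m - 1 := by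
  induction m with
  | zero => simp [bsdVal]
  | succ n ih =>
    rw [bsdVal_init]
    have h1 := ih (bsd_init hb)
    have h2 : |b (Fin.last n)| ≤ 1 := by
      have := hb (Fin.last n)
      simp only [Set.mem_insert_iff, Set.mem_singleton_iff] at this
      rcases this with h | h | h <;> simp [h]
    calc |bsdVal (Fin.init b) + b (Fin.last n) * 2 ^ n|
        ≤ |bsdVal (Fin.init b)| + |b (Fin.last n) * 2 ^ n| := abs_add_le _ _
      _ ≤ (2 ^ n - 1) + 1 * 2 ^ n := by
          gcongr
          rw [abs_mul]
          gcongr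
          simp
      _ = 2 ^ (n+1) - 1 := by ring

/-- `n` has a BSD representation of length `m` and weight `w`. -/
def RepW (m : ℕ) (n : ℤ) (w : ℕ) : Prop :=
  ∃ b : Fin m → ℤ, IsBSDDigits b ∧ bsdVal b = n ∧ wt b = w

/-- minimal weight of a BSD representation of `n`, over all lengths -/
noncomputable def wstar (n : ℤ) : ℕ := sInf {w | ∃ m, RepW m n w}

lemma repw_exists : ∀ n : ℤ, ∃ m w, RepW m n w := by
  have key : ∀ N : ℕ, ∀ n : ℤ, n.natAbs ≤ N → ∃ m w, RepW m n w := by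
    intro N
    induction N with
    | zero =>
      intro n hn
      have : n = 0 := by omega
      subst this
      exact ⟨0, 0, ![], fun j => j.elim0, by simp [bsdVal], by simp [wt]⟩
    | succ N ih =>
      intro n hn
      rcases Int.even_or_odd n with ⟨t, ht⟩ | ⟨t, ht⟩
      · have ht' : t.natAbs ≤ N := by omega
        obtain ⟨m, w, b, hb, hv, hw⟩ := ih t ht'
        exact ⟨m+1, _, Fin.cons 0 b, bsd_cons (by simp) hb,
          by rw [bsdVal_cons, hv]; omega, rfl⟩
      · rcases le_or_gt 0 n with hpos | hneg
        · have ht' : t.natAbs ≤ N := by omega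
          obtain ⟨m, w, b, hb, hv, hw⟩ := ih t ht'
          exact ⟨m+1, _, Fin.cons 1 b, bsd_cons (by simp) hb,
            by rw [bsdVal_cons, hv]; omega, rfl⟩
        · have ht' : (t+1).natAbs ≤ N := by omega
          obtain ⟨m, w, b, hb, hv, hw⟩ := ih (t+1) ht'
          exact ⟨m+1, _, Fin.cons (-1) b, bsd_cons (by simp) hb,
            by rw [bsdVal_cons, hv]; omega, rfl⟩
  exact fun n => key n.natAbs n le_rfl

lemma wstar_le {m : ℕ} {n : ℤ} {w : ℕ} (h : RepW m n w) : wstar n ≤ w :=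
  Nat.sInf_le ⟨m, h⟩

lemma wstar_rep (n : ℤ) : ∃ m, RepW m n (wstar n) := by
  have h : {w | ∃ m, RepW m n w}.Nonempty := by
    obtain ⟨m, w, h⟩ := repw_exists n
    exact ⟨w, m, h⟩
  exact Nat.sInf_mem h

lemma wstar_zero : wstar 0 = 0 :=
  Nat.eq_zero_of_le_zero (wstar_le ⟨![], fun j => j.elim0, by simp [bsdVal], by simp [wt]⟩)

lemma wt_neg {m : ℕ} (b : Fin m → ℤ) : wt (fun j => -(b j)) = wt b := by
  unfold wt; congr 1; funext j; simp

lemma repw_neg {m : ℕ} {n : ℤ} {w : ℕ} (h : RepW m n w) : RepW m (-n) w := by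
  obtain ⟨b, hb, hv, hw⟩ := h
  refine ⟨fun j => -(b j), ?_, ?_, ?_⟩
  · intro j
    have := hb j
    simp only [Set.mem_insert_iff, Set.mem_singleton_iff] at this ⊢
    omega
  · unfold bsdVal at hv ⊢
    rw [← neg_eq_iff_eq_neg, ← hv, ← Finset.sum_neg_distrib]
    exact Finset.sum_congr rfl fun j _ => by ring
  · rw [wt_neg]; exact hw

lemma wstar_neg (n : ℤ) : wstar (-n) = wstar n := by
  apply le_antisymm
  · obtain ⟨m, h⟩ := wstar_rep n
    exact wstar_le (repw_neg h)
  · obtain ⟨m, h⟩ := wstar_rep (-n)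
    have := wstar_le (repw_neg h)
    simpa using this

lemma wstar_even (n : ℤ) : wstar (2 * n) = wstar n := by
  apply le_antisymm
  · obtain ⟨m, b, hb, hv, hw⟩ := wstar_rep n
    refine wstar_le (m := m+1) ⟨Fin.cons 0 b, bsd_cons (by simp) hb, ?_, ?_⟩
    · rw [bsdVal_cons, hv]; ring
    · rw [wt_cons]; simp [hw]
  · obtain ⟨m, b, hb, hv, hw⟩ := wstar_rep (2 * n)
    match m with
    | 0 =>
      have : n = 0 := by
        have : bsdVal b = 0 := by simp [bsdVal]
        omega
      rw [this, wstar_zero]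
      exact Nat.zero_le _
    | m + 1 =>
      have hv' := bsdVal_tail b
      have h0 : b 0 = 0 := by
        have := hb 0
        simp only [Set.mem_insert_iff, Set.mem_singleton_iff] at this
        omega
      have hw' := wt_tail b
      rw [h0] at hv' hw'
      simp at hv' hw'
      refine le_trans (wstar_le (m := m) ⟨Fin.tail b, bsd_tail hb, ?_, rfl⟩) (by omega)
      omega

lemma wstar_odd (n : ℤ) : wstar (2 * n + 1) = 1 + min (wstar n) (wstar (n + 1)) := by
  apply le_antisymm
  · rcases le_total (wstar n) (wstar (n+1)) with h | h
    · obtain ⟨m, b, hb, hv, hw⟩ := wstar_rep n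
      refine le_trans (wstar_le (m := m+1) ⟨Fin.cons 1 b, bsd_cons (by simp) hb, ?_, rfl⟩) ?_
      · rw [bsdVal_cons, hv]; ring
      · rw [wt_cons, hw]
        simp [min_eq_left h]
    · obtain ⟨m, b, hb, hv, hw⟩ := wstar_rep (n+1)
      refine le_trans (wstar_le (m := m+1) ⟨Fin.cons (-1) b, bsd_cons (by simp) hb, ?_, rfl⟩) ?_
      · rw [bsdVal_cons, hv]; ring
      · rw [wt_cons, hw]
        simp [min_eq_right h]
  · obtain ⟨m, b, hb, hv, hw⟩ := wstar_rep (2 * n + 1)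
    match m with
    | 0 =>
      exfalso
      have : bsdVal b = 0 := by simp [bsdVal]
      omega
    | m + 1 =>
      have hv' := bsdVal_tail b
      have hw' := wt_tail b
      have hb0 := hb 0
      simp only [Set.mem_insert_iff, Set.mem_singleton_iff] at hb0
      rcases hb0 with h0 | h0 | h0
      · -- b 0 = -1 : tail represents n+1
        rw [h0] at hv' hw'
        have h1 : bsdVal (Fin.tail b) = n + 1 := by omega
        have h2 := wstar_le (m := m) ⟨Fin.tail b, bsd_tail hb, h1, rfl⟩
        have : min (wstar n) (wstar (n+1)) ≤ wt (Fin.tail b) :=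
          le_trans (min_le_right _ _) h2
        simp at hw'
        omega
      · exfalso; rw [h0] at hv'; omega
      · rw [h0] at hv' hw'
        have h1 : bsdVal (Fin.tail b) = n := by omega
        have h2 := wstar_le (m := m) ⟨Fin.tail b, bsd_tail hb, h1, rfl⟩
        have : min (wstar n) (wstar (n+1)) ≤ wt (Fin.tail b) :=
          le_trans (min_le_left _ _) h2
        simp at hw'
        omega

lemma wstar_one : wstar 1 = 1 := by
  have h := wstar_odd 0
  simp [wstar_zero] at h
  simpa using h

lemma wstar_neighbor : ∀ n : ℤ, wstar n ≤ wstar (n+1) + 1 ∧ wstar (n+1) ≤ wstar n + 1 := by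
  have key : ∀ N : ℕ, ∀ n : ℤ, n.natAbs ≤ N →
      wstar n ≤ wstar (n+1) + 1 ∧ wstar (n+1) ≤ wstar n + 1 := by
    intro N
    induction N with
    | zero =>
      intro n hn
      have : n = 0 := by omega
      subst this
      simp [wstar_zero, wstar_one]
    | succ N ih =>
      intro n hn
      rcases eq_or_ne n 0 with rfl | hn0
      · simp [wstar_zero, wstar_one]
      rcases eq_or_ne n (-1) with rfl | hn1
      · have h1 : wstar (-1) = 1 := by rw [wstar_neg 1, wstar_one]
        norm_num [h1, wstar_zero]
      rcases Int.even_or_odd n with ⟨t, ht⟩ | ⟨t, ht⟩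
      · have ht2 : n = 2 * t := by omega
        have htN : t.natAbs ≤ N := by omega
        obtain ⟨ih1, ih2⟩ := ih t htN
        have e1 : wstar n = wstar t := by rw [ht2, wstar_even]
        have e2 : wstar (n + 1) = 1 + min (wstar t) (wstar (t+1)) := by
          rw [ht2, wstar_odd]
        omega
      · have ht2 : n = 2 * t + 1 := by omega
        have htN : t.natAbs ≤ N := by omega
        obtain ⟨ih1, ih2⟩ := ih t htN
        have e1 : wstar n = 1 + min (wstar t) (wstar (t+1)) := by rw [ht2, wstar_odd]
        have e2 : wstar (n + 1) = wstar (t+1) := by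
          have h3 : n + 1 = 2 * (t + 1) := by omega
          rw [h3, wstar_even]
        omega
  exact fun n => key n.natAbs n le_rfl

lemma not_three_dvd_pow2 (m : ℕ) : ¬ (3 ∣ 2^m) := by
  intro h
  have := Nat.Prime.dvd_of_dvd_pow Nat.prime_three h
  omega

lemma wstar_pow_add : ∀ m : ℕ, ∀ v : ℤ, 3 * v.natAbs < 2 ^ m →
    wstar (2 ^ m + v) = 1 + wstar v := by
  intro m
  induction m with
  | zero =>
    intro v hv
    have : v = 0 := by omega
    subst this
    simp [wstar_one, wstar_zero]
  | succ m ih =>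
    intro v hv
    rcases Int.even_or_odd v with ⟨u, hu⟩ | ⟨u, hu⟩
    · have hv2 : v = 2 * u := by omega
      have e0 : (2:ℤ) ^ (m+1) + v = 2 * (2^m + u) := by rw [hv2]; ring
      have hu2 : 3 * u.natAbs < 2 ^ m := by
        have hp : (2:ℕ)^(m+1) = 2 * 2^m := by ring
        omega
      rw [e0, wstar_even, ih u hu2, hv2, wstar_even]
    · have hv2 : v = 2 * u + 1 := by omega
      have e0 : (2:ℤ) ^ (m+1) + v = 2 * (2^m + u) + 1 := by rw [hv2]; ring
      have epow : (2:ℕ)^(m+1) = 2 * 2^m := by ring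
      have ev : wstar v = 1 + min (wstar u) (wstar (u+1)) := by rw [hv2, wstar_odd]
      rw [e0, wstar_odd, ev]
      rcases le_or_gt 0 u with hupos | huneg
      · have hu2 : 3 * u.natAbs < 2 ^ m := by omega
        have e1 : wstar (2^m + u) = 1 + wstar u := ih u hu2
        rcases lt_or_ge (3 * (u+1).natAbs) (2^m : ℕ) with hcase | hcase
        · have e2 : wstar (2^m + u + 1) = 1 + wstar (u+1) := by
            have h7 := ih (u+1) hcase
            rw [← h7]; ring_nf
          rw [e1, e2]
          omega
        · have hb : 3 * (u + 1) = 2^m + 1 := by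
            have h3 : ¬ ((3:ℕ) ∣ 2^m) := not_three_dvd_pow2 m
            have h4 : 3 * (u+1).natAbs ≤ 2^m + 1 := by omega
            have hcst : ((2^m : ℕ) : ℤ) = (2:ℤ)^m := by push_cast; ring
            rcases eq_or_lt_of_le h4 with heq | hlt
            · omega
            · exfalso
              have h5 : 3 * (u+1).natAbs = 2^m := by omega
              exact h3 ⟨(u+1).natAbs, by omega⟩
          have e3 : (2:ℤ)^m + u + 1 = 2 * (2*u+1) + 1 := by
            have h8 : ((2^m : ℕ) : ℤ) = (2:ℤ)^m := by push_cast; ring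
            omega
          have e4 : wstar ((2:ℤ)^m + u + 1)
              = 1 + min (1 + min (wstar u) (wstar (u+1))) (wstar (u+1)) := by
            rw [e3, wstar_odd]
            congr 1
            have h5 : wstar (2*u+1) = 1 + min (wstar u) (wstar (u+1)) := wstar_odd u
            have h6 : wstar (2*u+1+1) = wstar (u+1) := by
              have h9 : 2*u+1+1 = 2*(u+1) := by ring
              rw [h9, wstar_even]
            rw [h5, h6]
          rw [e1, e4]
          omega
      · have hu12 : 3 * (u+1).natAbs < 2 ^ m := by omega
        have e2 : wstar (2^m + u + 1) = 1 + wstar (u+1) := by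
          have h7 := ih (u+1) hu12
          rw [← h7]; ring_nf
        rcases lt_or_ge (3 * u.natAbs) (2^m : ℕ) with hcase | hcase
        · rw [ih u hcase, e2]; omega
        · have hb : 3 * (-u) = 2^m + 1 := by
            have h3 : ¬ ((3:ℕ) ∣ 2^m) := not_three_dvd_pow2 m
            have h4 : 3 * u.natAbs ≤ 2^m + 1 := by omega
            have hcst : ((2^m : ℕ) : ℤ) = (2:ℤ)^m := by push_cast; ring
            rcases eq_or_lt_of_le h4 with heq | hlt
            · omega
            · exfalso
              have h5 : 3 * u.natAbs = 2^m := by omega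
              exact h3 ⟨u.natAbs, by omega⟩
          have e3 : (2:ℤ)^m + u = -(2*u+1) := by
            have h8 : ((2^m : ℕ) : ℤ) = (2:ℤ)^m := by push_cast; ring
            omega
          have e4 : wstar ((2:ℤ)^m + u) = 1 + min (wstar u) (wstar (u+1)) := by
            rw [e3, wstar_neg, wstar_odd]
          rw [e2, e4]
          omega

def NonAdj {k : ℕ} (b : Fin k → ℤ) : Prop :=
  ∀ j : Fin k, ∀ h : (j : ℕ) + 1 < k, b j = 0 ∨ b ⟨(j : ℕ) + 1, h⟩ = 0

lemma isReducedNAF_iff {k : ℕ} (b : Fin k → ℤ) :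
    IsReducedNAF b ↔ IsBSDDigits b ∧ NonAdj b ∧
      (∀ h : 0 < k, b ⟨k - 1, Nat.sub_lt h one_pos⟩ ≠ 0) := Iff.rfl

def cseq : ℕ → ℕ
  | 0 => 0
  | 1 => 1
  | t + 2 => 2 ^ (t + 1) + cseq t

lemma cseq_lt : ∀ t, cseq t + 1 ≤ 2 ^ t := by
  intro t
  induction t using Nat.strong_induction_on with
  | _ t ih =>
    match t with
    | 0 => decide
    | 1 => decide
    | s + 2 =>
      have h : cseq (s+2) = 2^(s+1) + cseq s := rfl
      have h3 : (2:ℕ)^(s+2) = 2 * 2^(s+1) := by ring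
      have h4 : (2:ℕ)^(s+1) = 2 * 2^s := by ring
      have := ih s (by omega)
      omega

lemma cseq_mono : ∀ t, cseq t ≤ cseq (t + 1) := by
  intro t
  induction t using Nat.strong_induction_on with
  | _ t ih =>
    match t with
    | 0 => decide
    | 1 => decide
    | s + 2 =>
      show cseq (s+2) ≤ cseq (s+3)
      have h : cseq (s+2) = 2^(s+1) + cseq s := rfl
      have h' : cseq (s+3) = 2^(s+2) + cseq (s+1) := rfl
      have h3 : (2:ℕ)^(s+2) = 2 * 2^(s+1) := by ring
      have := ih s (by omega)
      omega

lemma aseq_cseq : ∀ t, aseq (t + 2) + cseq t = 2 ^ (t + 1) := by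
  intro t
  induction t using Nat.strong_induction_on with
  | _ t ih =>
    match t with
    | 0 => decide
    | 1 => decide
    | s + 2 =>
      show aseq (s+4) + cseq (s+2) = 2^(s+3)
      have h : cseq (s+2) = 2^(s+1) + cseq s := rfl
      have h' : aseq (s+4) = 2^(s+2) + aseq (s+2) := rfl
      have h3 : (2:ℕ)^(s+2) = 2 * 2^(s+1) := by ring
      have h4 : (2:ℕ)^(s+3) = 2 * 2^(s+2) := by ring
      have := ih s (by omega)
      omega

lemma cseq_cseq : ∀ t, cseq t + cseq (t + 1) + 1 = 2 ^ (t + 1) := by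
  intro t
  induction t using Nat.strong_induction_on with
  | _ t ih =>
    match t with
    | 0 => decide
    | 1 => decide
    | s + 2 =>
      show cseq (s+2) + cseq (s+3) + 1 = 2^(s+3)
      have h : cseq (s+2) = 2^(s+1) + cseq s := rfl
      have h' : cseq (s+3) = 2^(s+2) + cseq (s+1) := rfl
      have h3 : (2:ℕ)^(s+2) = 2 * 2^(s+1) := by ring
      have h4 : (2:ℕ)^(s+3) = 2 * 2^(s+2) := by ring
      have := ih s (by omega)
      omega

lemma aseq_mono : ∀ t, aseq (t + 1) < aseq (t + 2) := by
  intro t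
  induction t using Nat.strong_induction_on with
  | _ t ih =>
    match t with
    | 0 => decide
    | 1 => decide
    | s + 2 =>
      show aseq (s+3) < aseq (s+4)
      have h : aseq (s+3) = 2^(s+1) + aseq (s+1) := rfl
      have h' : aseq (s+4) = 2^(s+2) + aseq (s+2) := rfl
      have h3 : (2:ℕ)^(s+2) = 2 * 2^(s+1) := by ring
      have := ih s (by omega)
      omega

lemma aseq_upper : ∀ t, 3 * aseq t ≤ 2 ^ t + 2 := by
  intro t
  induction t using Nat.strong_induction_on with
  | _ t ih =>
    match t with
    | 0 => decide
    | 1 => decide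
    | 2 => decide
    | s + 3 =>
      show 3 * aseq (s+3) ≤ 2^(s+3) + 2
      have h : aseq (s+3) = 2^(s+1) + aseq (s+1) := rfl
      have h3 : (2:ℕ)^(s+3) = 4 * 2^(s+1) := by ring
      have := ih (s+1) (by omega)
      omega

lemma aseq_pos : ∀ t, 1 ≤ aseq (t + 1) := by
  intro t
  induction t using Nat.strong_induction_on with
  | _ t ih =>
    match t with
    | 0 => decide
    | 1 => decide
    | s + 2 =>
      show 1 ≤ aseq (s+3)
      have h : aseq (s+3) = 2^(s+1) + aseq (s+1) := rfl
      have := Nat.one_le_two_pow (n := s+1)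
      omega

lemma aseq_sum : ∀ t, aseq (t + 1) + aseq (t + 2) = 2 ^ (t + 1) + 1 := by
  intro t
  induction t using Nat.strong_induction_on with
  | _ t ih =>
    match t with
    | 0 => decide
    | 1 => decide
    | s + 2 =>
      show aseq (s+3) + aseq (s+4) = 2^(s+3) + 1
      have h : aseq (s+3) = 2^(s+1) + aseq (s+1) := rfl
      have h' : aseq (s+4) = 2^(s+2) + aseq (s+2) := rfl
      have h3 : (2:ℕ)^(s+2) = 2 * 2^(s+1) := by ring
      have h4 : (2:ℕ)^(s+3) = 2 * 2^(s+2) := by ring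
      have := ih s (by omega)
      omega

lemma nonadj_init {m : ℕ} {b : Fin (m+1) → ℤ} (hb : NonAdj b) : NonAdj (Fin.init b) := by
  intro j h
  have h' : ((Fin.castSucc j : Fin (m+1)) : ℕ) + 1 < m + 1 := by
    show (j : ℕ) + 1 < m + 1
    omega
  exact hb (Fin.castSucc j) h' 

lemma NA_bound : ∀ t : ℕ, ∀ b : Fin t → ℤ, IsBSDDigits b → NonAdj b →
    (bsdVal b).natAbs ≤ cseq t := by
  intro t
  induction t using Nat.strong_induction_on with
  | _ t ih =>
    match t with
    | 0 =>
      intro b _ _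
      simp [bsdVal, cseq]
    | 1 =>
      intro b hB _
      have h0 := hB 0
      simp only [Set.mem_insert_iff, Set.mem_singleton_iff] at h0
      have hv : bsdVal b = b 0 := by simp [bsdVal]
      rw [hv]
      show (b 0).natAbs ≤ cseq 1
      have hc : cseq 1 = 1 := rfl
      omega
    | s + 2 =>
      intro b hB hNA
      have hdec : bsdVal b = bsdVal (Fin.init b) + b (Fin.last (s+1)) * 2^(s+1) :=
        bsdVal_init b
      have hcs : cseq (s+2) = 2^(s+1) + cseq s := rfl
      rcases eq_or_ne (b (Fin.last (s+1))) 0 with h0 | h0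
      · -- top digit zero
        have h1 := ih (s+1) (by omega) (Fin.init b) (bsd_init hB) (nonadj_init hNA)
        have h2 : cseq (s+1) ≤ cseq (s+2) := cseq_mono (s+1)
        rw [hdec, h0]
        simpa using le_trans h1 (by omega)
      · -- top digit nonzero: position s is zero
        have hpair := hNA ⟨s, by omega⟩ (by show s + 1 < s + 2; omega)
        have hlast : (⟨s + 1, by omega⟩ : Fin (s+2)) = Fin.last (s+1) := by
          apply Fin.ext; simp
        rw [hlast] at hpair
        have hs0 : b ⟨s, by omega⟩ = 0 := by tauto
        have hinit_top : (Fin.init b) (Fin.last s) = 0 := hs0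
        have hdec2 : bsdVal (Fin.init b) =
            bsdVal (Fin.init (Fin.init b)) + (Fin.init b) (Fin.last s) * 2^s :=
          bsdVal_init _
        rw [hinit_top] at hdec2
        simp at hdec2
        have h1 := ih s (by omega) (Fin.init (Fin.init b))
          (bsd_init (bsd_init hB)) (nonadj_init (nonadj_init hNA))
        have htop := hB (Fin.last (s+1))
        simp only [Set.mem_insert_iff, Set.mem_singleton_iff] at htop
        rw [hdec, hdec2]
        have hp : ((2:ℤ)^(s+1)).natAbs = 2^(s+1) := by
          rw [Int.natAbs_pow]; rfl
        rcases htop with h | h | h <;> rw [h] <;> omega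

lemma naf_bounds : ∀ L : ℕ, ∀ b : Fin L → ℤ, IsReducedNAF b → 0 < bsdVal b →
    (aseq L : ℤ) ≤ bsdVal b ∧ bsdVal b < (aseq (L+1) : ℤ) := by
  intro L
  match L with
  | 0 =>
    intro b _ hpos
    simp [bsdVal] at hpos
  | 1 =>
    intro b hred hpos
    obtain ⟨hB, hNA, htop⟩ := hred
    have hv : bsdVal b = b 0 := by simp [bsdVal]
    have ht := htop (by omega)
    have h0 : b ⟨0, by omega⟩ ∈ ({-1, 0, 1} : Set ℤ) := hB _
    simp only [Set.mem_insert_iff, Set.mem_singleton_iff] at h0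
    have e0 : b ⟨0, by omega⟩ = b 0 := rfl
    have ha1 : aseq 1 = 1 := rfl
    have ha2 : aseq 2 = 2 := rfl
    rw [hv, ← e0, ha1, ha2]
    omega
  | s + 2 =>
    intro b hred hpos
    obtain ⟨hB, hNA, htop⟩ := hred
    have hdec : bsdVal b = bsdVal (Fin.init b) + b (Fin.last (s+1)) * 2^(s+1) :=
      bsdVal_init b
    have ht : b (Fin.last (s+1)) ≠ 0 := htop (by omega)
    have htv := hB (Fin.last (s+1))
    simp only [Set.mem_insert_iff, Set.mem_singleton_iff] at htv
    have habs : |bsdVal (Fin.init b)| ≤ 2^(s+1) - 1 := abs_bsdVal_le (bsd_init hB)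
    have habs' := abs_le.mp habs
    have htop1 : b (Fin.last (s+1)) = 1 := by
      rcases htv with h | h | h
      · exfalso
        rw [hdec, h] at hpos
        have : (0:ℤ) < 2^(s+1) := by positivity
        omega
      · exact absurd h ht
      · exact h
    -- the digit below the top is zero
    have hpair := hNA ⟨s, by omega⟩ (by show s + 1 < s + 2; omega)
    have hlast : (⟨s + 1, by show s + 1 < s + 2; omega⟩ : Fin (s+2)) = Fin.last (s+1) := by
      apply Fin.ext; simp
    rw [hlast] at hpair
    have hs0 : b ⟨s, by omega⟩ = 0 := by
      rcases hpair with h | h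
      · exact h
      · rw [htop1] at h; exact absurd h one_ne_zero
    have hinit_top : (Fin.init b) (Fin.last s) = 0 := hs0
    have hdec2 : bsdVal (Fin.init b) =
        bsdVal (Fin.init (Fin.init b)) + (Fin.init b) (Fin.last s) * 2^s :=
      bsdVal_init _
    rw [hinit_top] at hdec2
    simp at hdec2
    have hbound := NA_bound s (Fin.init (Fin.init b))
      (bsd_init (bsd_init hB)) (nonadj_init (nonadj_init hNA))
    have h1 : aseq (s+2) + cseq s = 2^(s+1) := aseq_cseq s
    have h2 : aseq (s+3) + cseq (s+1) = 2^(s+2) := aseq_cseq (s+1)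
    have h3 : cseq s + cseq (s+1) + 1 = 2^(s+1) := cseq_cseq s
    have hc1 : ((2^(s+1) : ℕ) : ℤ) = (2:ℤ)^(s+1) := by push_cast; ring
    have hc2 : (2:ℕ)^(s+2) = 2 * 2^(s+1) := by ring
    have goal_eq : bsdVal b = 2^(s+1) + bsdVal (Fin.init (Fin.init b)) := by
      rw [hdec, htop1, hdec2]; ring
    constructor
    · show (aseq (s+2) : ℤ) ≤ bsdVal b
      omega
    · show bsdVal b < (aseq (s+3) : ℤ)
      omega

lemma hasNAFLen_val_zero {n : ℤ} (h : HasNAFLen n 0) : n = 0 := by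
  obtain ⟨b, _, hv⟩ := h
  simp [bsdVal] at hv
  omega

lemma aseq_strictmono : StrictMono (fun t => aseq (t+1)) :=
  strictMono_nat_of_lt_succ (fun t => aseq_mono t)

lemma hasNAFLen_unique {n : ℤ} (hn : 0 < n) {i j : ℕ} (hi : HasNAFLen n i)
    (hj : HasNAFLen n j) : i = j := by
  match i, j with
  | 0, _ => exact absurd (hasNAFLen_val_zero hi) (by omega)
  | _, 0 => exact absurd (hasNAFLen_val_zero hj) (by omega)
  | i'+1, j'+1 =>
    obtain ⟨bi, hbi, hvi⟩ := hi
    obtain ⟨bj, hbj, hvj⟩ := hj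
    have h1 := naf_bounds _ bi hbi (by omega)
    have h2 := naf_bounds _ bj hbj (by omega)
    rw [hvi] at h1
    rw [hvj] at h2
    by_contra hne
    rcases lt_or_gt_of_ne hne with hlt | hlt
    · have : aseq (i'+1+1) ≤ aseq (j'+1) := by
        
        exact (aseq_strictmono.le_iff_le).mpr (by omega)
      have hcast : (aseq (i'+1+1) : ℤ) ≤ (aseq (j'+1) : ℤ) := by exact_mod_cast this
      omega
    · have : aseq (j'+1+1) ≤ aseq (i'+1) := by
        exact (aseq_strictmono.le_iff_le).mpr (by omega)
      have hcast : (aseq (j'+1+1) : ℤ) ≤ (aseq (i'+1) : ℤ) := by exact_mod_cast this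
      omega

lemma nafLen_eq {n : ℕ} (hn : 0 < n) {L : ℕ} (h : HasNAFLen (n:ℤ) L) : nafLen n = L := by
  have hmem : nafLen n ∈ {k | HasNAFLen (n:ℤ) k} := Nat.sInf_mem ⟨L, h⟩
  exact hasNAFLen_unique (by exact_mod_cast hn) hmem h

lemma cons_succ_mk {m : ℕ} (d : ℤ) (b : Fin m → ℤ) {i : ℕ} (hi : i < m)
    (hi' : i + 1 < m + 1) :
    (Fin.cons d b : Fin (m+1) → ℤ) ⟨i+1, hi'⟩ = b ⟨i, hi⟩ := by
  have e : (⟨i+1, hi'⟩ : Fin (m+1)) = Fin.succ ⟨i, hi⟩ := by apply Fin.ext; simp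
  rw [e, Fin.cons_succ]

lemma reduced_cons {m : ℕ} {d : ℤ} {b : Fin (m+1) → ℤ} (hd : d ∈ ({-1,0,1} : Set ℤ))
    (hred : IsReducedNAF b) (h0 : d = 0 ∨ b 0 = 0) :
    IsReducedNAF (Fin.cons d b : Fin (m+2) → ℤ) := by
  obtain ⟨hB, hNA, htop⟩ := hred
  refine ⟨bsd_cons hd hB, ?_, ?_⟩
  · intro j h
    obtain ⟨jv, hjlt⟩ := j
    match jv, hjlt, h with
    | 0, hjlt, h =>
      rcases h0 with h0 | h0
      · exact Or.inl h0
      · exact Or.inr h0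
    | i+1, hjlt, h =>
      have hi1 : i + 1 < m + 1 := by simpa using h
      have := hNA ⟨i, by omega⟩ (by show i + 1 < m + 1; omega)
      rcases this with h1 | h1
      · exact Or.inl h1
      · exact Or.inr h1
  · intro _
    exact htop (by omega)

lemma exists_optNAF : ∀ v : ℕ, ∃ L, ∃ b : Fin L → ℤ,
    IsReducedNAF b ∧ bsdVal b = (v:ℤ) ∧ wt b = wstar (v:ℤ) := by
  intro v
  induction v using Nat.strong_induction_on with
  | _ v ih =>
    rcases eq_or_ne v 0 with rfl | hv0
    · refine ⟨0, ![], ⟨fun j => j.elim0, fun j => j.elim0, fun h => by omega⟩, ?_, ?_⟩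
      · simp [bsdVal]
      · simp [wt, wstar_zero]
    rcases eq_or_ne v 1 with rfl | hv1
    · refine ⟨1, fun _ => 1, ⟨fun j => by simp, fun j h => by omega, fun h => ?_⟩, ?_, ?_⟩
      · show (1:ℤ) ≠ 0; norm_num
      · simp [bsdVal]
      · simp [wt, wstar_one]
    rcases Nat.even_or_odd v with ⟨t, ht⟩ | ⟨t, ht⟩
    · -- even, v = 2t with t ≥ 1
      have ht1 : 1 ≤ t := by omega
      obtain ⟨L, b, hred, hval, hwt⟩ := ih t (by omega)
      match L, b, hred, hval, hwt with
      | 0, b, hred, hval, hwt =>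
        exfalso
        have : bsdVal b = 0 := by simp [bsdVal]
        omega
      | L+1, b, hred, hval, hwt =>
        refine ⟨L+2, Fin.cons 0 b, reduced_cons (by simp) hred (Or.inl rfl), ?_, ?_⟩
        · rw [bsdVal_cons, hval]; push_cast; omega
        · rw [wt_cons, hwt]
          have : ((v:ℕ):ℤ) = 2 * (t:ℤ) := by push_cast; omega
          rw [this, wstar_even]
          simp
    · -- odd
      have hmod : v % 4 = 1 ∨ v % 4 = 3 := by omega
      rcases hmod with hmod | hmod
      · -- v = 4s+1, v > 1 so s ≥ 1
        set s := v / 4 with hs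
        have hv4 : v = 4 * s + 1 := by omega
        have hs1 : 1 ≤ s := by omega
        obtain ⟨L, b, hred, hval, hwt⟩ := ih s (by omega)
        match L, b, hred, hval, hwt with
        | 0, b, hred, hval, hwt =>
          exfalso
          have : bsdVal b = 0 := by simp [bsdVal]
          omega
        | L+1, b, hred, hval, hwt =>
          have hinner : IsReducedNAF (Fin.cons 0 b : Fin (L+2) → ℤ) :=
            reduced_cons (by simp) hred (Or.inl rfl)
          refine ⟨L+3, Fin.cons 1 (Fin.cons 0 b),
            reduced_cons (by simp) hinner (Or.inr (by simp)), ?_, ?_⟩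
          · rw [bsdVal_cons, bsdVal_cons, hval]; push_cast; omega
          · rw [wt_cons, wt_cons, hwt]
            norm_num
            have e1 : ((v:ℕ):ℤ) = 2 * (2 * (s:ℤ)) + 1 := by push_cast; omega
            have e2 : wstar ((v:ℕ):ℤ) = 1 + min (wstar (2 * (s:ℤ))) (wstar (2 * (s:ℤ) + 1)) := by
              rw [e1, wstar_odd]
            have e3 : wstar (2 * (s:ℤ)) = wstar (s:ℤ) := wstar_even _
            have e4 : wstar (2 * (s:ℤ) + 1) = 1 + min (wstar (s:ℤ)) (wstar ((s:ℤ)+1)) :=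
              wstar_odd _
            have e5 := wstar_neighbor (s:ℤ)
            omega
      · -- v = 4s+3
        set s := v / 4 with hs
        have hv4 : v = 4 * s + 3 := by omega
        obtain ⟨L, b, hred, hval, hwt⟩ := ih (s+1) (by omega)
        match L, b, hred, hval, hwt with
        | 0, b, hred, hval, hwt =>
          exfalso
          have : bsdVal b = 0 := by simp [bsdVal]
          omega
        | L+1, b, hred, hval, hwt =>
          have hinner : IsReducedNAF (Fin.cons 0 b : Fin (L+2) → ℤ) :=
            reduced_cons (by simp) hred (Or.inl rfl)
          refine ⟨L+3, Fin.cons (-1) (Fin.cons 0 b),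
            reduced_cons (by simp) hinner (Or.inr (by simp)), ?_, ?_⟩
          · rw [bsdVal_cons, bsdVal_cons, hval]; push_cast; omega
          · rw [wt_cons, wt_cons, hwt]
            norm_num
            have e1 : ((v:ℕ):ℤ) = 2 * (2 * (s:ℤ) + 1) + 1 := by push_cast; omega
            have e2 : wstar ((v:ℕ):ℤ)
                = 1 + min (wstar (2 * (s:ℤ) + 1)) (wstar (2 * (s:ℤ) + 1 + 1)) := by
              rw [e1, wstar_odd]
            have e3 : wstar (2 * (s:ℤ) + 1 + 1) = wstar ((s:ℤ) + 1) := by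
              rw [show (2 * (s:ℤ) + 1 + 1) = 2 * ((s:ℤ)+1) from by ring, wstar_even]
            have e4 : wstar (2 * (s:ℤ) + 1) = 1 + min (wstar (s:ℤ)) (wstar ((s:ℤ)+1)) :=
              wstar_odd _
            have e5 := wstar_neighbor (s:ℤ)
            omega

lemma snoc_mk_lt {m : ℕ} (c : Fin m → ℤ) (d : ℤ) {i : ℕ} (hi : i < m) (hi' : i < m + 1) :
    (Fin.snoc c d : Fin (m+1) → ℤ) ⟨i, hi'⟩ = c ⟨i, hi⟩ := by
  simp [Fin.snoc, hi]

lemma snoc_mk_last {m : ℕ} (c : Fin m → ℤ) (d : ℤ) (h : m < m + 1) :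
    (Fin.snoc c d : Fin (m+1) → ℤ) ⟨m, h⟩ = d := by
  simp [Fin.snoc]

lemma nonadj_snoc {m : ℕ} {c : Fin m → ℤ} {d : ℤ} (hNA : NonAdj c)
    (h : d = 0 ∨ (∀ hm : 0 < m, c ⟨m-1, Nat.sub_lt hm one_pos⟩ = 0)) :
    NonAdj (Fin.snoc c d : Fin (m+1) → ℤ) := by
  intro j hj
  obtain ⟨jv, hjlt⟩ := j
  simp only at hj
  rcases eq_or_lt_of_le (show jv + 1 ≤ m by omega) with he | hlt
  · -- the pair (m-1, m)
    rcases h with h | h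
    · right
      have e : (⟨jv+1, hj⟩ : Fin (m+1)) = ⟨m, by omega⟩ := by apply Fin.ext; simp [he]
      rw [e, snoc_mk_last]
      exact h
    · left
      have hm : 0 < m := by omega
      rw [snoc_mk_lt c d (show jv < m by omega) hjlt]
      have e : (⟨jv, show jv < m by omega⟩ : Fin m) = ⟨m-1, Nat.sub_lt hm one_pos⟩ := by
        apply Fin.ext; simp; omega
      rw [e]
      exact h hm
  · have := hNA ⟨jv, by omega⟩ (by show jv + 1 < m; omega)
    rcases this with h1 | h1
    · left
      rw [snoc_mk_lt c d (show jv < m by omega) hjlt]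
      exact h1
    · right
      rw [snoc_mk_lt c d (show jv + 1 < m by omega) hj]
      exact h1

lemma exists_pad {ℓ : ℕ} (b : Fin ℓ → ℤ) (hB : IsBSDDigits b) (hNA : NonAdj b) :
    ∀ m, ℓ ≤ m → ∃ c : Fin m → ℤ, IsBSDDigits c ∧ NonAdj c ∧ bsdVal c = bsdVal b ∧
      wt c = wt b ∧ (∀ j : Fin m, ℓ ≤ (j:ℕ) → c j = 0) := by
  intro m
  induction m with
  | zero =>
    intro h
    have hl0 : ℓ = 0 := by omega
    subst hl0
    exact ⟨b, hB, hNA, rfl, rfl, fun j _ => j.elim0⟩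
  | succ m ih =>
    intro h
    rcases Nat.lt_or_ge m ℓ with hlt | hle
    · have hl : ℓ = m + 1 := by omega
      subst hl
      exact ⟨b, hB, hNA, rfl, rfl, fun j hj => absurd j.isLt (by omega)⟩
    · obtain ⟨c, hcB, hcNA, hcv, hcw, hcz⟩ := ih hle
      refine ⟨Fin.snoc c 0, bsd_snoc hcB (by simp), ?_, ?_, ?_, ?_⟩
      · exact nonadj_snoc hcNA (Or.inl rfl)
      · rw [bsdVal_snoc, hcv]; ring
      · rw [wt_snoc, hcw]; simp
      · intro j hj
        obtain ⟨jv, hjlt⟩ := j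
        rcases eq_or_lt_of_le (show jv ≤ m by omega) with he | hlt
        · have e : (⟨jv, hjlt⟩ : Fin (m+1)) = ⟨m, by omega⟩ := by apply Fin.ext; simp [he]
          rw [e, snoc_mk_last]
        · rw [snoc_mk_lt c 0 (show jv < m by omega) hjlt]
          exact hcz ⟨jv, by omega⟩ hj

lemma bsdVal_smul {m : ℕ} (σ : ℤ) (b : Fin m → ℤ) :
    bsdVal (fun j => σ * b j) = σ * bsdVal b := by
  unfold bsdVal
  rw [Finset.mul_sum]
  exact Finset.sum_congr rfl fun j _ => by ring

lemma wt_smul {m : ℕ} {σ : ℤ} (hσ : σ ≠ 0) (b : Fin m → ℤ) :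
    wt (fun j => σ * b j) = wt b := by
  unfold wt
  exact Finset.sum_congr rfl fun j _ => by simp [mul_eq_zero, hσ]

/-- Construct a reduced NAF of `2^m + σ*v` of length `m+1` from one of `v` of length `< m`. -/
lemma build_big {ℓ m : ℕ} (b : Fin ℓ → ℤ) (hred : IsReducedNAF b) (hlm : ℓ < m)
    (σ : ℤ) (hσ : σ = 1 ∨ σ = -1) :
    ∃ c : Fin (m+1) → ℤ, IsReducedNAF c ∧
      bsdVal c = 2^m + σ * bsdVal b ∧ wt c = wt b + 1 := by
  obtain ⟨hB, hNA, _⟩ := hred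
  have hσ0 : σ ≠ 0 := by rcases hσ with h | h <;> simp [h]
  have hB' : IsBSDDigits (fun j => σ * b j) := by
    intro j
    have := hB j
    simp only [Set.mem_insert_iff, Set.mem_singleton_iff] at this ⊢
    rcases hσ with h | h <;> rcases this with h1 | h1 | h1 <;> simp [h, h1]
  have hNA' : NonAdj (fun j => σ * b j) := by
    intro j h
    rcases hNA j h with h1 | h1
    · left; simp [h1]
    · right; simp [h1]
  obtain ⟨c0, hc0B, hc0NA, hc0v, hc0w, hc0z⟩ :=
    exists_pad (fun j => σ * b j) hB' hNA' m (le_of_lt hlm)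
  refine ⟨Fin.snoc c0 1, ⟨bsd_snoc hc0B (by simp), ?_, ?_⟩, ?_, ?_⟩
  · refine nonadj_snoc hc0NA (Or.inr ?_)
    intro hm
    exact hc0z ⟨m-1, Nat.sub_lt hm one_pos⟩ (by simp; omega)
  · intro _
    show (Fin.snoc c0 1 : Fin (m+1) → ℤ) ⟨m+1-1, _⟩ ≠ 0
    have e : (⟨m+1-1, Nat.sub_lt (by omega) one_pos⟩ : Fin (m+1)) = ⟨m, by omega⟩ := by
      apply Fin.ext; simp
    rw [e, snoc_mk_last]
    norm_num
  · rw [bsdVal_snoc, hc0v, bsdVal_smul]; ring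
  · rw [wt_snoc, hc0w, wt_smul hσ0]; simp

lemma reduced_val_ne_zero {L : ℕ} (b : Fin (L+1) → ℤ) (hred : IsReducedNAF b) :
    bsdVal b ≠ 0 := by
  obtain ⟨hB, _, htop⟩ := hred
  have hdec : bsdVal b = bsdVal (Fin.init b) + b (Fin.last L) * 2^L := bsdVal_init b
  have habs := abs_le.mp (abs_bsdVal_le (bsd_init hB))
  have htv := hB (Fin.last L)
  simp only [Set.mem_insert_iff, Set.mem_singleton_iff] at htv
  have ht : b (Fin.last L) ≠ 0 := htop (by omega)
  have hpow : (0:ℤ) < 2^L := by positivity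
  rcases htv with h | h | h
  · rw [hdec, h]; intro hc; omega
  · exact absurd h ht
  · rw [hdec, h]; intro hc; omega

/-- an optimal reduced NAF of `v < aseq j` has length `< j`. -/
lemma naf_len_lt {v j L : ℕ} (hj : v < aseq j) (b : Fin L → ℤ)
    (hred : IsReducedNAF b) (hval : bsdVal b = (v:ℤ)) : L < j := by
  have hj1 : 1 ≤ j := by
    by_contra hc
    have : j = 0 := by omega
    rw [this] at hj
    have : aseq 0 = 0 := rfl
    omega
  match L with
  | 0 => omega
  | L+1 =>
    have hvpos : 0 < v := by
      rcases Nat.eq_zero_or_pos v with h | h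
      · exfalso
        apply reduced_val_ne_zero b hred
        rw [hval, h]; simp
      · exact h
    have hb := naf_bounds (L+1) b hred (by rw [hval]; exact_mod_cast hvpos)
    rw [hval] at hb
    have h1 : aseq (L+1) ≤ v := by exact_mod_cast hb.1
    have h2 : aseq (L+1) < aseq j := by omega
    have := aseq_strictmono.lt_iff_lt (a := L) (b := j - 1)
    have hj' : aseq (L+1) < aseq (j-1+1) := by
      have : j - 1 + 1 = j := by omega
      rw [this]
      exact h2
    have hLj : L < j - 1 := by
      have := (aseq_strictmono.lt_iff_lt (a := L) (b := j-1)).mp hj'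
      exact this
    omega

lemma minWeight_eq {n : ℕ}
    (h : ∃ c : Fin (nafLen n) → ℤ, IsBSDDigits c ∧ bsdVal c = (n:ℤ) ∧ wt c = wstar (n:ℤ)) :
    minWeight n = wstar (n:ℤ) := by
  obtain ⟨c, hcB, hcv, hcw⟩ := h
  have hmem : wstar (n:ℤ) ∈ {w : ℕ | ∃ b : Fin (nafLen n) → ℤ,
      IsBSDDigits b ∧ bsdVal b = (n : ℤ) ∧ {j | b j ≠ 0}.ncard = w} :=
    ⟨c, hcB, hcv, by rw [ncard_eq_wt]; exact hcw⟩
  apply le_antisymm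
  · exact Nat.sInf_le hmem
  · have hne : {w : ℕ | ∃ b : Fin (nafLen n) → ℤ,
        IsBSDDigits b ∧ bsdVal b = (n : ℤ) ∧ {j | b j ≠ 0}.ncard = w}.Nonempty := ⟨_, hmem⟩
    obtain ⟨b, hbB, hbv, hbw⟩ := Nat.sInf_mem hne
    rw [ncard_eq_wt] at hbw
    calc wstar (n:ℤ) ≤ wt b := wstar_le ⟨b, hbB, hbv, rfl⟩
    _ = _ := hbw

def Rset (L : ℕ) (n : ℤ) (w : ℕ) : Set (Fin L → ℤ) :=
  {b | IsBSDDigits b ∧ bsdVal b = n ∧ {j | b j ≠ 0}.ncard = w}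

lemma Mfun_eq (n : ℕ) : Mfun n = (Rset (nafLen n) (n:ℤ) (minWeight n)).ncard := rfl

lemma mem_Rset {L : ℕ} {n : ℤ} {w : ℕ} {b : Fin L → ℤ} :
    b ∈ Rset L n w ↔ IsBSDDigits b ∧ bsdVal b = n ∧ wt b = w := by
  unfold Rset
  rw [Set.mem_setOf_eq, ncard_eq_wt]

lemma peel {m : ℕ} {n : ℤ} {w : ℕ} {d0 : ℤ} {e : ℕ} (hd0 : d0 ∈ ({-1,0,1} : Set ℤ))
    (he : e = if d0 = 0 then 0 else 1)
    (hforce : ∀ b : Fin (m+1) → ℤ, IsBSDDigits b → bsdVal b = n → wt b = w + e →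
      b (Fin.last m) = d0) :
    (Rset (m+1) n (w+e)).ncard = (Rset m (n - d0 * 2^m) w).ncard := by
  have himg : Rset (m+1) n (w+e)
      = (fun b : Fin m → ℤ => Fin.snoc b d0) '' Rset m (n - d0*2^m) w := by
    ext b
    constructor
    · intro hb
      rw [mem_Rset] at hb
      obtain ⟨hB, hv, hw⟩ := hb
      have hlast := hforce b hB hv hw
      refine ⟨Fin.init b, ?_, by rw [← hlast]; exact Fin.snoc_init_self b⟩
      rw [mem_Rset]
      refine ⟨bsd_init hB, ?_, ?_⟩
      · have hd := bsdVal_init b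
        rw [hlast] at hd
        omega
      · have hd := wt_init b
        rw [hlast, ← he] at hd
        omega
    · rintro ⟨b', hb', rfl⟩
      rw [mem_Rset] at hb' ⊢
      obtain ⟨hB, hv, hw⟩ := hb'
      refine ⟨bsd_snoc hB hd0, ?_, ?_⟩
      · rw [bsdVal_snoc, hv]; ring
      · rw [wt_snoc, hw, he]
  rw [himg, Set.ncard_image_of_injective]
  intro x y hxy
  have h1 := congrArg Fin.init hxy
  simpa [Fin.init_snoc] using h1

lemma bsd_negf {m : ℕ} {b : Fin m → ℤ} (hb : IsBSDDigits b) :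
    IsBSDDigits (fun j => -(b j)) := by
  intro j
  have := hb j
  simp only [Set.mem_insert_iff, Set.mem_singleton_iff] at this ⊢
  omega

lemma bsdVal_negf {m : ℕ} (b : Fin m → ℤ) : bsdVal (fun j => -(b j)) = -(bsdVal b) := by
  have := bsdVal_smul (-1) b
  simp only [neg_one_mul] at this
  rw [this]

lemma Rset_finite (L : ℕ) (n : ℤ) (w : ℕ) : (Rset L n w).Finite := by
  apply Set.Finite.subset
    (Set.Finite.pi (fun i : Fin L =>
      (Set.Finite.insert (-1) (Set.Finite.insert 0 (Set.finite_singleton 1)))))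
  intro b hb
  rw [Set.mem_pi]
  intro j _
  exact hb.1 j

lemma Rset_neg_le (L : ℕ) (n : ℤ) (w : ℕ) :
    (Rset L (-n) w).ncard ≤ (Rset L n w).ncard := by
  have himg : Rset L (-n) w ⊆ (fun b : Fin L → ℤ => fun j => -(b j)) '' Rset L n w := by
    intro b hb
    rw [mem_Rset] at hb
    obtain ⟨hB, hv, hw⟩ := hb
    refine ⟨fun j => -(b j), ?_, ?_⟩
    · rw [mem_Rset]
      refine ⟨bsd_negf hB, ?_, ?_⟩
      · rw [bsdVal_negf, hv]; ring
      · rw [← hw, wt_neg]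
    · funext j; simp
  calc (Rset L (-n) w).ncard
      ≤ ((fun b : Fin L → ℤ => fun j => -(b j)) '' Rset L n w).ncard := by
        exact Set.ncard_le_ncard himg (Set.Finite.image _ (Rset_finite L n w))
    _ = (Rset L n w).ncard := by
        apply Set.ncard_image_of_injective
        intro x y hxy
        funext j
        have := congrFun hxy j
        simpa using this

lemma Rset_neg (L : ℕ) (n : ℤ) (w : ℕ) :
    (Rset L (-n) w).ncard = (Rset L n w).ncard := by
  apply le_antisymm (Rset_neg_le L n w)
  have := Rset_neg_le L (-n) w
  rwa [neg_neg] at this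

lemma force_top_one {m : ℕ} {n : ℤ} (hn : (2:ℤ)^m ≤ n) {w : ℕ}
    (b : Fin (m+1) → ℤ) (hB : IsBSDDigits b) (hv : bsdVal b = n) (_ : wt b = w) :
    b (Fin.last m) = 1 := by
  have hdec := bsdVal_init b
  have habs := abs_le.mp (abs_bsdVal_le (bsd_init hB))
  have htv := hB (Fin.last m)
  simp only [Set.mem_insert_iff, Set.mem_singleton_iff] at htv
  have hpow : (0:ℤ) < 2^m := by positivity
  rcases htv with h | h | h
  · exfalso; rw [h] at hdec; omega
  · exfalso; rw [h] at hdec; omega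
  · exact h

lemma force_second_zero {m : ℕ} {x : ℤ}
    (hx1 : wstar (x - 2^m) = 1 + wstar x) (hx2 : wstar (x + 2^m) = 1 + wstar x)
    (b : Fin (m+1) → ℤ) (hB : IsBSDDigits b) (hv : bsdVal b = x) (hw : wt b = wstar x) :
    b (Fin.last m) = 0 := by
  have hdec := bsdVal_init b
  have hwdec := wt_init b
  have htv := hB (Fin.last m)
  simp only [Set.mem_insert_iff, Set.mem_singleton_iff] at htv
  rcases htv with h | h | h
  · exfalso
    rw [h] at hdec hwdec
    have hval : bsdVal (Fin.init b) = x + 2^m := by omega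
    have hle : wstar (x + 2^m) ≤ wt (Fin.init b) := wstar_le ⟨_, bsd_init hB, hval, rfl⟩
    simp at hwdec
    omega
  · exact h
  · exfalso
    rw [h] at hdec hwdec
    have hval : bsdVal (Fin.init b) = x - 2^m := by omega
    have hle : wstar (x - 2^m) ≤ wt (Fin.init b) := wstar_le ⟨_, bsd_init hB, hval, rfl⟩
    simp at hwdec
    omega

lemma force3 {m : ℕ} {v : ℕ} (hvm : v < 2^m)
    (hw2 : wstar ((2:ℤ)^m - v) = 1 + wstar (v:ℤ))
    (b : Fin (m+2) → ℤ) (hB : IsBSDDigits b) (hv : bsdVal b = 2^(m+1) - (v:ℤ))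
    (hw : wt b = wstar (v:ℤ) + 1) :
    b (Fin.last (m+1)) = 1 := by
  have hdec := bsdVal_init b
  have hwdec := wt_init b
  have habs := abs_le.mp (abs_bsdVal_le (bsd_init hB))
  have htv := hB (Fin.last (m+1))
  simp only [Set.mem_insert_iff, Set.mem_singleton_iff] at htv
  have hpow : (0:ℤ) < 2^m := by positivity
  have hpow2 : ((2:ℤ))^(m+1) = 2 * 2^m := by ring
  have hcv : (0:ℤ) ≤ (v:ℤ) ∧ (v:ℤ) < 2^m := ⟨by positivity, by exact_mod_cast hvm⟩
  rcases htv with h | h | h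
  · exfalso; rw [h] at hdec; omega
  · -- top digit 0 : impossible
    exfalso
    rw [h] at hdec hwdec
    simp at hdec hwdec
    -- init b is a rep of 2^(m+1) - v of length m+1 and weight wstar v + 1
    have hdec2 := bsdVal_init (Fin.init b)
    have hwdec2 := wt_init (Fin.init b)
    have habs2 := abs_le.mp (abs_bsdVal_le (bsd_init (bsd_init hB)))
    have htv2 := (bsd_init hB) (Fin.last m)
    simp only [Set.mem_insert_iff, Set.mem_singleton_iff] at htv2
    rcases htv2 with h2 | h2 | h2
    · rw [h2] at hdec2; omega
    · rw [h2] at hdec2; omega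
    · rw [h2] at hdec2 hwdec2
      have hval : bsdVal (Fin.init (Fin.init b)) = 2^m - (v:ℤ) := by omega
      have hle : wstar ((2:ℤ)^m - v) ≤ wt (Fin.init (Fin.init b)) :=
        wstar_le ⟨_, bsd_init (bsd_init hB), hval, rfl⟩
      simp at hwdec2
      omega
  · exact h

theorem core (m v : ℕ) (hm : 1 ≤ m) (hv : v < aseq m) :
    Mfun (2^(m+1) - v) = Mfun (2^m + v) ∧ Mfun (2^(m+1) + v) = Mfun (2^m + v) := by
  have hA3 : 3 * aseq m ≤ 2^m + 2 := aseq_upper m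
  have hApos : 1 ≤ aseq m := by
    have := aseq_pos (m-1)
    rwa [show m - 1 + 1 = m by omega] at this
  have hpow1 : 1 ≤ 2^m := Nat.one_le_two_pow
  have hv3 : 3 * v ≤ 2^m - 1 := by omega
  have hvm : v < 2^m := by omega
  have hpows : (2:ℕ)^(m+1) = 2 * 2^m := by ring
  -- wstar values
  have hna : ((v:ℤ)).natAbs = v := Int.natAbs_natCast v
  have hnan : ((-(v:ℤ))).natAbs = v := by simp
  have w1 : wstar ((2:ℤ)^m + v) = 1 + wstar (v:ℤ) :=
    wstar_pow_add m v (by rw [hna]; omega)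
  have w2 : wstar ((2:ℤ)^m - v) = 1 + wstar (v:ℤ) := by
    have := wstar_pow_add m (-(v:ℤ)) (by rw [hnan]; omega)
    rw [wstar_neg] at this
    rw [← this]
    ring_nf
  have w3 : wstar ((2:ℤ)^(m+1) + v) = 1 + wstar (v:ℤ) :=
    wstar_pow_add (m+1) v (by rw [hna]; omega)
  have w4 : wstar ((2:ℤ)^(m+1) - v) = 1 + wstar (v:ℤ) := by
    have := wstar_pow_add (m+1) (-(v:ℤ)) (by rw [hnan]; omega)
    rw [wstar_neg] at this
    rw [← this]
    ring_nf
  -- optimal NAF of v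
  obtain ⟨L, b, hred, hval, hwt⟩ := exists_optNAF v
  have hL : L < m := naf_len_lt hv b hred hval
  obtain ⟨c1, hc1red, hc1v, hc1w⟩ := build_big b hred hL 1 (Or.inl rfl)
  obtain ⟨c2, hc2red, hc2v, hc2w⟩ := build_big b hred (show L < m+1 by omega) 1 (Or.inl rfl)
  obtain ⟨c3, hc3red, hc3v, hc3w⟩ := build_big b hred (show L < m+1 by omega) (-1) (Or.inr rfl)
  rw [hval] at hc1v hc2v hc3v
  rw [hwt] at hc1w hc2w hc3w
  -- casts of the three natural numbers
  have e1 : ((2^m + v : ℕ) : ℤ) = (2:ℤ)^m + v := by push_cast; ring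
  have e2 : ((2^(m+1) + v : ℕ) : ℤ) = (2:ℤ)^(m+1) + v := by push_cast; ring
  have e3 : ((2^(m+1) - v : ℕ) : ℤ) = (2:ℤ)^(m+1) - v := by
    have : v ≤ 2^(m+1) := by omega
    push_cast [Nat.cast_sub this]
    ring
  -- nafLen computations
  have hn1len : nafLen (2^m + v) = m + 1 :=
    nafLen_eq (by omega) ⟨c1, hc1red, by rw [hc1v, e1]; ring⟩
  have hn2len : nafLen (2^(m+1) + v) = m + 2 :=
    nafLen_eq (by omega) ⟨c2, hc2red, by rw [hc2v, e2]; ring⟩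
  have hn3len : nafLen (2^(m+1) - v) = m + 2 :=
    nafLen_eq (by omega) ⟨c3, hc3red, by rw [hc3v, e3]; ring⟩
  -- minWeight computations
  have hn1w : minWeight (2^m + v) = wstar (v:ℤ) + 1 := by
    have := minWeight_eq (n := 2^m + v) ?_
    · rw [this, e1, w1]; omega
    · rw [hn1len]
      exact ⟨c1, hc1red.1, by rw [hc1v, e1]; ring, by rw [hc1w, e1, w1]; omega⟩
  have hn2w : minWeight (2^(m+1) + v) = wstar (v:ℤ) + 1 := by
    have := minWeight_eq (n := 2^(m+1) + v) ?_
    · rw [this, e2, w3]; omega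
    · rw [hn2len]
      exact ⟨c2, hc2red.1, by rw [hc2v, e2]; ring, by rw [hc2w, e2, w3]; omega⟩
  have hn3w : minWeight (2^(m+1) - v) = wstar (v:ℤ) + 1 := by
    have := minWeight_eq (n := 2^(m+1) - v) ?_
    · rw [this, e3, w4]; omega
    · rw [hn3len]
      exact ⟨c3, hc3red.1, by rw [hc3v, e3]; ring, by rw [hc3w, e3, w4]; omega⟩
  -- peel n1 : Rset (m+1) (2^m+v) (W+1) = Rset m v W
  have hx1 : wstar ((v:ℤ) - 2^m) = 1 + wstar (v:ℤ) := by
    rw [show (v:ℤ) - 2^m = -((2:ℤ)^m - v) from by ring, wstar_neg, w2]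
  have hx2 : wstar ((v:ℤ) + 2^m) = 1 + wstar (v:ℤ) := by
    rw [show (v:ℤ) + 2^m = (2:ℤ)^m + v from by ring, w1]
  have hy1 : wstar (-(v:ℤ) - 2^m) = 1 + wstar (-(v:ℤ)) := by
    rw [show -(v:ℤ) - 2^m = -((2:ℤ)^m + v) from by ring, wstar_neg, w1, wstar_neg]
  have hy2 : wstar (-(v:ℤ) + 2^m) = 1 + wstar (-(v:ℤ)) := by
    rw [show -(v:ℤ) + 2^m = (2:ℤ)^m - v from by ring, w2, wstar_neg]
  have count1 : (Rset (m+1) ((2:ℤ)^m + v) (wstar (v:ℤ) + 1)).ncard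
      = (Rset m (v:ℤ) (wstar (v:ℤ))).ncard := by
    have hp := peel (m := m) (n := (2:ℤ)^m + v) (w := wstar (v:ℤ)) (d0 := 1) (e := 1)
      (by simp) (by norm_num)
      (fun b hB hv hw => force_top_one (by
        have hnn : (0:ℤ) ≤ (v:ℤ) := by positivity
        omega) b hB hv hw)
    rw [hp]
    congr 1
    ring_nf
  have peel20 : ∀ x : ℤ, wstar (x - 2^m) = 1 + wstar x → wstar (x + 2^m) = 1 + wstar x →
      (Rset (m+1) x (wstar x)).ncard = (Rset m x (wstar x)).ncard := by
    intro x h1 h2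
    have hp := peel (m := m) (n := x) (w := wstar x) (d0 := 0) (e := 0)
      (by simp) (by norm_num)
      (fun b hB hv hw => force_second_zero h1 h2 b hB hv (by omega))
    rw [show wstar x = wstar x + 0 from by omega, hp]
    congr 1
    ring_nf
  have count2 : (Rset (m+2) ((2:ℤ)^(m+1) + v) (wstar (v:ℤ) + 1)).ncard
      = (Rset m (v:ℤ) (wstar (v:ℤ))).ncard := by
    have hp := peel (m := m+1) (n := (2:ℤ)^(m+1) + v) (w := wstar (v:ℤ)) (d0 := 1) (e := 1)
      (by simp) (by norm_num)
      (fun b hB hv hw => force_top_one (by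
        have hnn : (0:ℤ) ≤ (v:ℤ) := by positivity
        omega) b hB hv hw)
    rw [hp, show (2:ℤ)^(m+1) + v - 1 * 2^(m+1) = (v:ℤ) from by ring]
    exact peel20 (v:ℤ) hx1 hx2
  have count3 : (Rset (m+2) ((2:ℤ)^(m+1) - v) (wstar (v:ℤ) + 1)).ncard
      = (Rset m (v:ℤ) (wstar (v:ℤ))).ncard := by
    have hp := peel (m := m+1) (n := (2:ℤ)^(m+1) - v) (w := wstar (v:ℤ)) (d0 := 1) (e := 1)
      (by simp) (by norm_num)
      (fun b hB hv hw => force3 hvm w2 b hB hv hw)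
    rw [hp, show (2:ℤ)^(m+1) - v - 1 * 2^(m+1) = -(v:ℤ) from by ring]
    have hq := peel20 (-(v:ℤ)) (by rw [hy1]) (by rw [hy2])
    rw [wstar_neg] at hq
    rw [hq, Rset_neg]
  -- assemble
  constructor
  · rw [Mfun_eq, Mfun_eq, hn3len, hn3w, hn1len, hn1w, e1, e3, count1, count3]
  · rw [Mfun_eq, Mfun_eq, hn2len, hn2w, hn1len, hn1w, e1, e2, count1, count2]

theorem num_opt_recursion_B (k u : ℕ) (hk : 3 ≤ k)
    (hu : u ≤ 2 ^ (k - 1) - (2 ^ (k - 1) - aseq (k - 2) + 1)) :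
    Mfun (2 ^ (k - 1) - aseq (k - 2) + 1 + u)
      = Mfun (2 ^ (k - 1) - (aseq (k - 1) + u)) ∧
    Mfun (2 ^ k - (2 ^ (k - 1) - aseq (k - 2) + 1 + u))
      = Mfun (2 ^ (k - 1) - (aseq (k - 1) + u)) := by
  obtain ⟨K, rfl⟩ : ∃ K, k = K + 3 := ⟨k - 3, by omega⟩
  rw [show K + 3 - 1 = K + 2 from by omega, show K + 3 - 2 = K + 1 from by omega] at *
  have hA3 : 3 * aseq (K+1) ≤ 2^(K+1) + 2 := aseq_upper (K+1)
  have hApos : 1 ≤ aseq (K+1) := aseq_pos K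
  have hpow1 : 1 ≤ (2:ℕ)^(K+1) := Nat.one_le_two_pow
  have hAle : aseq (K+1) ≤ 2^(K+1) := by omega
  have hsum : aseq (K+1) + aseq (K+2) = 2^(K+1) + 1 := aseq_sum K
  have hb1 : (2:ℕ)^(K+2) = 2 * 2^(K+1) := by ring
  have hb2 : (2:ℕ)^(K+3) = 4 * 2^(K+1) := by ring
  have hb3 : (2:ℕ)^(K+1+1) = 2^(K+2) := by ring
  have hu' : u ≤ aseq (K+1) - 1 := by omega
  set v := aseq (K+1) - 1 - u with hvdef
  have hv : v < aseq (K+1) := by omega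
  have hcore := core (K+1) v (by omega) hv
  have harg1 : 2^(K+2) - aseq (K+1) + 1 + u = 2^(K+1+1) - v := by omega
  have harg2 : 2^(K+3) - (2^(K+2) - aseq (K+1) + 1 + u) = 2^(K+1+1) + v := by omega
  have harg3 : 2^(K+2) - (aseq (K+2) + u) = 2^(K+1) + v := by omega
  rw [harg2, harg1, harg3]
  exact hcore
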